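/- Let (b_n)_{n≥0} be a strictly decreasing sequence in (0,1] with b_0 = 1 and b_n → 0, let a_n = b_{n-1} - b_n be the lengths, and let (a*_n) be the non-increasing rearrangement of (a_n) with partial tail sums b*_m = 1 - Σ_{i≤m} a*_i. Then for every n ≥ 1 there exists m ≥ 0 such that α^{-1}·b*_m < b_n < α·b*_m, where α = (1+√5)/2 is the golden ratio. -/

import Mathlib

open Filter

theorem stmt_10 (b : ℕ → ℝ) (hb0 : b 0 = 1) (hb_anti : StrictAnti b)
    (hb_pos : ∀ n, 0 < b n) (hb_lim : Tendsto b atTop (nhds 0))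
    (astar : ℕ → ℝ) (e : ℕ ≃ ℕ)
    (hperm : ∀ n, astar n = b (e n) - b (e n + 1))
    (hmono : Antitone astar) :
    ∀ n : ℕ, 1 ≤ n → ∃ m : ℕ,
      ((1 + Real.sqrt 5) / 2)⁻¹ * (1 - ∑ i ∈ Finset.range m, astar i) < b n ∧
      b n < ((1 + Real.sqrt 5) / 2) * (1 - ∑ i ∈ Finset.range m, astar i) := by
  classical
  set α : ℝ := (1 + Real.sqrt 5) / 2 with hαdef
  have hs5 : Real.sqrt 5 ^ 2 = 5 := Real.sq_sqrt (by norm_num)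
  have hs5' : 2 ≤ Real.sqrt 5 := by nlinarith [Real.sqrt_nonneg 5]
  have hα1 : 1 < α := by rw [hαdef]; nlinarith
  have hα0 : 0 < α := lt_trans one_pos hα1
  have hαinv : α - α⁻¹ = 1 := by
    have hαne : α ≠ 0 := ne_of_gt hα0
    have hsq : α ^ 2 = α + 1 := by rw [hαdef]; field_simp; nlinarith
    field_simp
    nlinarith
  set a : ℕ → ℝ := fun k => b k - b (k + 1) with hadef
  have ha_pos : ∀ k, 0 < a k := fun k => sub_pos.2 (hb_anti (Nat.lt_succ_self k))
  have hsum_range : ∀ N, ∑ k ∈ Finset.range N, a k = 1 - b N := by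
    intro N
    rw [hadef]
    rw [Finset.sum_range_sub' b, hb0]
  have hsummable : Summable a := by
    apply summable_of_sum_range_le (c := 1) (fun k => (ha_pos k).le)
    intro N
    rw [hsum_range]
    linarith [hb_pos N]
  have htends : Tendsto (fun N => ∑ k ∈ Finset.range N, a k) atTop (nhds 1) := by
    simp only [hsum_range]
    have : Tendsto (fun N => 1 - b N) atTop (nhds (1 - 0)) :=
      tendsto_const_nhds.sub hb_lim
    simpa using this
  have hHasSum : HasSum a 1 := (hsummable.hasSum_iff_tendsto_nat).2 htends
  have hastar : astar = a ∘ e := funext fun k => hperm k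
  have hHasSumAstar : HasSum astar 1 := by
    rw [hastar]; exact (Equiv.hasSum_iff e).2 hHasSum
  have hbstar_lim :
      Tendsto (fun m => 1 - ∑ i ∈ Finset.range m, astar i) atTop (nhds 0) := by
    have := hHasSumAstar.tendsto_sum_nat
    have h2 : Tendsto (fun m => 1 - ∑ i ∈ Finset.range m, astar i) atTop
        (nhds (1 - 1)) := tendsto_const_nhds.sub this
    simpa using h2
  intro n hn
  by_contra hcon
  push_neg at hcon
  set t : ℝ := b n with htdef
  set B : ℕ → ℝ := fun m => 1 - ∑ i ∈ Finset.range m, astar i with hBdef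
  have ht0 : 0 < t := hb_pos n
  have ht1 : t < 1 := by rw [htdef, ← hb0]; exact hb_anti (by omega)
  have hαinv_lt : α⁻¹ * t < t := by
    have : α⁻¹ < 1 := inv_lt_one_of_one_lt₀ hα1
    nlinarith
  have hdich : ∀ m, α * t ≤ B m ∨ B m ≤ α⁻¹ * t := by
    intro m
    by_cases h : α⁻¹ * B m < t
    · right
      have h2 : α * B m ≤ t := hcon m h
      have : α⁻¹ * (α * B m) ≤ α⁻¹ * t :=
        mul_le_mul_of_nonneg_left h2 (inv_nonneg.2 hα0.le)
      calc B m = α⁻¹ * (α * B m) := by field_simp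
        _ ≤ α⁻¹ * t := this
    · left
      push_neg at h
      have : α * (α⁻¹ * B m) ≤ α * (α⁻¹ * B m) := le_refl _
      calc α * t ≤ α * (α⁻¹ * B m) := mul_le_mul_of_nonneg_left h hα0.le
        _ = B m := by field_simp
  have hB0 : B 0 = 1 := by simp [hBdef]
  have hP0 : α * t ≤ B 0 := by
    rcases hdich 0 with h | h
    · exact h
    · exfalso; rw [hB0] at h; linarith
  have hQ : ∃ m, B m < α * t := by
    have := hbstar_lim.eventually_lt_const (by positivity : (0:ℝ) < α * t)
    exact this.exists
  set m₁ := Nat.find hQ with hm₁def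
  have hm₁spec : B m₁ < α * t := Nat.find_spec hQ
  have hm₁pos : m₁ ≠ 0 := by
    intro h
    rw [h] at hm₁spec
    linarith
  obtain ⟨M, hM⟩ : ∃ M, m₁ = M + 1 := ⟨m₁ - 1, by omega⟩
  have hPM : α * t ≤ B M := by
    have hlt : M < Nat.find hQ := by omega
    have := Nat.find_min hQ hlt
    linarith [not_lt.mp this]
  have hPM1 : B (M + 1) ≤ α⁻¹ * t := by
    rcases hdich (M + 1) with h | h
    · exfalso; rw [hM] at hm₁spec; linarith
    · exact h
  have hstep : B (M + 1) = B M - astar M := by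
    simp [hBdef, Finset.sum_range_succ]; ring
  clear_value B t α m₁
  have hastarM : t ≤ astar M := by
    have h5 : α * t - α⁻¹ * t = t := by linear_combination t * hαinv
    linarith [hstep, hPM, hPM1]
  have hkey : ∀ i, i ≤ M → e i < n := by
    intro i hi
    by_contra h
    push_neg at h
    have h1 : t ≤ astar i := le_trans hastarM (hmono hi)
    have h2 : astar i = b (e i) - b (e i + 1) := hperm i
    have h3 : b (e i) ≤ b n := hb_anti.antitone h
    have h4 : 0 < b (e i + 1) := hb_pos _
    rw [htdef] at h1
    linarith [h1, h2 ▸ h1]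
  have hsum_le : ∑ i ∈ Finset.range (M + 1), astar i ≤ 1 - t := by
    have heq : ∑ i ∈ Finset.range (M + 1), astar i
        = ∑ k ∈ (Finset.range (M + 1)).image e, a k := by
      rw [Finset.sum_image (fun x _ y _ h => e.injective h)]
      exact Finset.sum_congr rfl fun i _ => hperm i
    rw [heq]
    have hle : ∑ k ∈ (Finset.range (M + 1)).image e, a k
        ≤ ∑ k ∈ Finset.range n, a k := by
      apply Finset.sum_le_sum_of_subset_of_nonneg
      · intro k hk
        simp only [Finset.mem_image, Finset.mem_range] at hk ⊢
        obtain ⟨i, hi, rfl⟩ := hk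
        exact hkey i (by omega)
      · intro k _ _
        exact (ha_pos k).le
    rw [hsum_range] at hle
    rw [htdef]
    exact hle
  have hBM1 : t ≤ B (M + 1) := by
    simp only [hBdef]
    linarith
  linarith
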